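/- arXiv:2003.12613 — 6 statements merged into one kernel-verified Lean document; each statement's English description precedes it below -/
import Mathlib

section
/- Let S and A be finite nonempty sets, γ ∈ [0,1), Δ ≥ 0, and let (s_t, a_t, s'_t, r_t)_{t∈ℕ} be an arbitrary trajectory with s_t, s'_t ∈ S, a_t ∈ A, r_t ∈ ℝ, let α_t ∈ [0,1] be learning rates, and let δ_t ∈ ℝ satisfy |δ_t| ≤ Δ for all t. Define three sequences of Q-tables Q_t, Q_t^+, Q_t^- : S × A → ℝ, all starting from the same initial table Q_0, where at each step t only the entry (s_t,a_t) is updated: Q_{t+1}(s_t,a_t) = (1-α_t)Q_t(s_t,a_t) + α_t(r_t + δ_t + γ max_{a'∈A} Q_t(s'_t,a')), with Q^+ using δ_t replaced by Δ and Q^- using δ_t replaced by -Δ, and all other entries unchanged. Then for every t ∈ ℕ and every (s,a) ∈ S × A, Q_t^-(s,a) ≤ Q_t(s,a) ≤ Q_t^+(s,a). -/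
/-- The maximum of a real-valued function over a finite nonempty action space. -/
noncomputable def qmax {A : Type*} [Fintype A] [Nonempty A] (f : A → ℝ) : ℝ :=
  Finset.univ.sup' Finset.univ_nonempty f

/-- Domination lemma: a reward-poisoned Q-learning trajectory with perturbations
bounded by `Δ` is sandwiched between the trajectories fed rewards `r t - Δ` and `r t + Δ`. -/
theorem poisoned_q_learning_sandwich
    {S A : Type*} [Fintype S] [Nonempty S] [Fintype A] [Nonempty A]
    (γ Δ : ℝ) (hγ0 : 0 ≤ γ) (hγ1 : γ < 1) (hΔ : 0 ≤ Δ)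
    (s : ℕ → S) (a : ℕ → A) (s' : ℕ → S) (r : ℕ → ℝ)
    (α : ℕ → ℝ) (hα0 : ∀ t, 0 ≤ α t) (hα1 : ∀ t, α t ≤ 1)
    (δ : ℕ → ℝ) (hδ : ∀ t, |δ t| ≤ Δ)
    (Q Qp Qm : ℕ → S → A → ℝ)
    (hinitp : Q 0 = Qp 0) (hinitm : Q 0 = Qm 0)
    (hQ : ∀ t, Q (t + 1) (s t) (a t) =
      (1 - α t) * Q t (s t) (a t) + α t * (r t + δ t + γ * qmax (Q t (s' t))))
    (hQoff : ∀ t x b, (x, b) ≠ (s t, a t) → Q (t + 1) x b = Q t x b)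
    (hQp : ∀ t, Qp (t + 1) (s t) (a t) =
      (1 - α t) * Qp t (s t) (a t) + α t * (r t + Δ + γ * qmax (Qp t (s' t))))
    (hQpoff : ∀ t x b, (x, b) ≠ (s t, a t) → Qp (t + 1) x b = Qp t x b)
    (hQm : ∀ t, Qm (t + 1) (s t) (a t) =
      (1 - α t) * Qm t (s t) (a t) + α t * (r t + -Δ + γ * qmax (Qm t (s' t))))
    (hQmoff : ∀ t x b, (x, b) ≠ (s t, a t) → Qm (t + 1) x b = Qm t x b) :
    ∀ t x b, Qm t x b ≤ Q t x b ∧ Q t x b ≤ Qp t x b := by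
  have qmax_mono : ∀ (f g : A → ℝ), (∀ b, f b ≤ g b) → qmax f ≤ qmax g := by
    intro f g h
    exact Finset.sup'_mono_fun (fun b _ => h b)
  intro t
  induction t with
  | zero => intro x b; rw [← hinitp, ← hinitm]; exact ⟨le_refl _, le_refl _⟩
  | succ t ih =>
    intro x b
    by_cases hxb : (x, b) = (s t, a t)
    · have hx : x = s t := (Prod.mk.injEq _ _ _ _ ▸ hxb).1
      have hb : b = a t := (Prod.mk.injEq _ _ _ _ ▸ hxb).2
      subst hx; subst hb
      rw [hQ t, hQp t, hQm t]
      have h1 : 0 ≤ 1 - α t := by linarith [hα1 t]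
      have hm : qmax (Qm t (s' t)) ≤ qmax (Q t (s' t)) :=
        qmax_mono _ _ (fun b => (ih (s' t) b).1)
      have hp : qmax (Q t (s' t)) ≤ qmax (Qp t (s' t)) :=
        qmax_mono _ _ (fun b => (ih (s' t) b).2)
      have hδ1 : -Δ ≤ δ t := neg_le_of_abs_le (hδ t)
      have hδ2 : δ t ≤ Δ := le_of_abs_le (hδ t)
      have hcur := ih (s t) (a t)
      constructor
      · have h2 : γ * qmax (Qm t (s' t)) ≤ γ * qmax (Q t (s' t)) :=
          mul_le_mul_of_nonneg_left hm hγ0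
        have h3 := mul_le_mul_of_nonneg_left hcur.1 h1
        have h4 : α t * (r t + -Δ + γ * qmax (Qm t (s' t))) ≤
            α t * (r t + δ t + γ * qmax (Q t (s' t))) :=
          mul_le_mul_of_nonneg_left (by linarith) (hα0 t)
        linarith
      · have h2 : γ * qmax (Q t (s' t)) ≤ γ * qmax (Qp t (s' t)) :=
          mul_le_mul_of_nonneg_left hp hγ0
        have h3 := mul_le_mul_of_nonneg_left hcur.2 h1
        have h4 : α t * (r t + δ t + γ * qmax (Q t (s' t))) ≤
            α t * (r t + Δ + γ * qmax (Qp t (s' t))) :=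
          mul_le_mul_of_nonneg_left (by linarith) (hα0 t)
        linarith
    · rw [hQoff t x b hxb, hQpoff t x b hxb, hQmoff t x b hxb]
      exact ih x b
end

section
/- Let S and A be finite nonempty sets with |A| ≥ 2, γ ∈ [0,1), and let Q* : S × A → ℝ and π* : S → A satisfy Q*(s,π*(s)) > Q*(s,a) for every s ∈ S and every a ≠ π*(s) (π* is the unique greedy policy of Q*). Define Δ₁ = (1-γ)·min_{s∈S}[Q*(s,π*(s)) - max_{a≠π*(s)} Q*(s,a)]/2. If 0 ≤ Δ < Δ₁ and Q : S × A → ℝ satisfies |Q(s,a) - Q*(s,a)| ≤ Δ/(1-γ) for all (s,a), then for every s ∈ S and every a ≠ π*(s), Q(s,π*(s)) > Q(s,a); i.e., the greedy policy of Q equals π*. -/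
/-- Strong infeasibility certificate (deterministic core of Corollary 1):
if `Δ < Δ₁` and `Q` is within `Δ/(1-γ)` of `Q*` in every entry, then the greedy
policy of `Q` equals the optimal policy `π*`. -/
theorem strong_infeasibility_certificate
    {S A : Type*} [Fintype S] [Nonempty S] [Fintype A] [Nonempty A]
    (hA : 2 ≤ Fintype.card A)
    (γ : ℝ) (hγ0 : 0 ≤ γ) (hγ1 : γ < 1)
    (Qstar : S → A → ℝ) (πstar : S → A)
    (hgreedy : ∀ s, ∀ a ≠ πstar s, Qstar s a < Qstar s (πstar s))
    (Δ : ℝ) (hΔ0 : 0 ≤ Δ)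
    (hΔ1 : Δ < (1 - γ) * Finset.univ.inf' Finset.univ_nonempty
      (fun s => Qstar s (πstar s) - sSup (Qstar s '' {a | a ≠ πstar s})) / 2)
    (Q : S → A → ℝ) (hQ : ∀ s a, |Q s a - Qstar s a| ≤ Δ / (1 - γ)) :
    ∀ s, ∀ a ≠ πstar s, Q s a < Q s (πstar s) := by
  intro s a ha
  have hpos : (0:ℝ) < 1 - γ := by linarith
  set M := sSup (Qstar s '' {a | a ≠ πstar s}) with hM
  have hbdd : BddAbove (Qstar s '' {a | a ≠ πstar s}) := (Set.toFinite _).bddAbove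
  have hle : Qstar s a ≤ M := le_csSup hbdd ⟨a, ha, rfl⟩
  have hinf : Finset.univ.inf' Finset.univ_nonempty
      (fun s => Qstar s (πstar s) - sSup (Qstar s '' {a | a ≠ πstar s}))
      ≤ Qstar s (πstar s) - M := Finset.inf'_le _ (Finset.mem_univ s)
  have hΔ2 : Δ < (1 - γ) * (Qstar s (πstar s) - M) / 2 := by nlinarith
  have hD : Δ / (1 - γ) < (Qstar s (πstar s) - M) / 2 := by
    rw [div_lt_div_iff₀ hpos (by norm_num : (0:ℝ) < 2)]
    nlinarith
  have h1 := abs_le.mp (hQ s a)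
  have h2 := abs_le.mp (hQ s (πstar s))
  linarith [h1.1, h1.2, h2.1, h2.2]
end

section
/- Let S and A be finite nonempty sets, γ ∈ [0,1), and let Q* : S × A → ℝ and π* : S → A satisfy Q*(s,π*(s)) > Q*(s,a) for every s ∈ S and every a ≠ π*(s). Let π† : S → 𝒫(A) be a target partial policy with π†(s) nonempty for all s, and let S† = {s ∈ S : π†(s) ≠ A}. Define Δ₂ = (1-γ)·max_{s∈S}[Q*(s,π*(s)) - max_{a∈π†(s)} Q*(s,a)]/2. If 0 ≤ Δ < Δ₂ and Q : S × A → ℝ satisfies |Q(s,a) - Q*(s,a)| ≤ Δ/(1-γ) for all (s,a), then there exists a state s ∈ S† and an action a ∉ π†(s) such that Q(s,a) > Q(s,a') for all a' ∈ π†(s); i.e., the greedy policy of Q disagrees with π† on some target state. -/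
/-- Weak infeasibility certificate (deterministic core of Corollary 2):
if `Δ < Δ₂` and `Q` is within `Δ/(1-γ)` of `Q*` in every entry, then the greedy
policy of `Q` disagrees with the target partial policy `π†` on some target state. -/
theorem weak_infeasibility_certificate
    {S A : Type*} [Fintype S] [Nonempty S] [Fintype A] [Nonempty A]
    (γ : ℝ) (hγ0 : 0 ≤ γ) (hγ1 : γ < 1)
    (Qstar : S → A → ℝ) (πstar : S → A)
    (hgreedy : ∀ s, ∀ a ≠ πstar s, Qstar s a < Qstar s (πstar s))
    (πdag : S → Set A) (hπdag : ∀ s, (πdag s).Nonempty)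
    (Δ : ℝ) (hΔ0 : 0 ≤ Δ)
    (hΔ2 : Δ < (1 - γ) * Finset.univ.sup' Finset.univ_nonempty
      (fun s => Qstar s (πstar s) - sSup (Qstar s '' πdag s)) / 2)
    (Q : S → A → ℝ) (hQ : ∀ s a, |Q s a - Qstar s a| ≤ Δ / (1 - γ)) :
    ∃ s, πdag s ≠ Set.univ ∧ ∃ a ∉ πdag s, ∀ a' ∈ πdag s, Q s a' < Q s a := by
  have h1γ : (0:ℝ) < 1 - γ := by linarith
  obtain ⟨s, -, hs⟩ := Finset.exists_mem_eq_sup' (Finset.univ_nonempty (α := S))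
    (fun s => Qstar s (πstar s) - sSup (Qstar s '' πdag s))
  set g : ℝ := Qstar s (πstar s) - sSup (Qstar s '' πdag s) with hg
  rw [hs] at hΔ2
  have hgpos : 0 < g := by nlinarith
  have hbdd : BddAbove (Qstar s '' πdag s) := (Set.toFinite _).bddAbove
  have hle : ∀ a' ∈ πdag s, Qstar s a' ≤ sSup (Qstar s '' πdag s) :=
    fun a' ha' => le_csSup hbdd ⟨a', ha', rfl⟩
  have hnotmem : πstar s ∉ πdag s := by
    intro hmem
    have := hle _ hmem
    simp only [hg] at hgpos; linarith
  have hDg : Δ / (1 - γ) < g / 2 := by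
    rw [div_lt_div_iff₀ h1γ (by norm_num)]
    nlinarith
  refine ⟨s, ?_, πstar s, hnotmem, ?_⟩
  · intro h; exact hnotmem (h ▸ Set.mem_univ _)
  · intro a' ha'
    have h1 := hQ s a'
    have h2 := hQ s (πstar s)
    have h3 := hle a' ha'
    rw [abs_le] at h1 h2
    simp only [hg] at hgpos hDg
    linarith [h1.1, h1.2, h2.1, h2.2]
end

section
/- Let S and A be finite nonempty sets, γ ≥ 0, Q* : S × A → ℝ, and let π† : S → 𝒫(A) be a target partial policy such that for every s in S† = {s : π†(s) ≠ A}, both π†(s) and its complement A∖π†(s) are nonempty. Define Δ₃ = (1+γ)/2 · max_{s∈S†}[max_{a∉π†(s)} Q*(s,a) - max_{a∈π†(s)} Q*(s,a)]₊, where [x]₊ = max(x,0). Suppose Δ > Δ₃ and define Q' : S × A → ℝ by Q'(s,a) = Q*(s,a) + Δ/(1+γ) if s ∈ S† and a ∈ π†(s); Q'(s,a) = Q*(s,a) - Δ/(1+γ) if s ∈ S† and a ∉ π†(s); and Q'(s,a) = Q*(s,a) if s ∉ S†. Then for every s ∈ S†, max_{a∈π†(s)} Q'(s,a) > max_{a∉π†(s)}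 Q'(s,a); i.e., Q' lies in the target Q-table set 𝒬†. -/
private lemma sSup_image_add' (T : Set ℝ) (hT : T.Finite) (hne : T.Nonempty) (c : ℝ) :
    sSup ((fun x => x + c) '' T) = sSup T + c := by
  have hT' : ((fun x => x + c) '' T).Finite := hT.image _
  have hne' : ((fun x => x + c) '' T).Nonempty := hne.image _
  apply le_antisymm
  · obtain ⟨x, hx, hxe⟩ := hne'.csSup_mem hT'
    rw [← hxe]
    exact add_le_add_left (le_csSup hT.bddAbove hx) c
  · exact le_csSup hT'.bddAbove ⟨_, hne.csSup_mem hT, rfl⟩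

/-- Central construction in the proof of Theorem 2: if `Δ > Δ₃`, the table `Q'`
obtained from `Q*` by adding `Δ/(1+γ)` on desired target (state, action) pairs and
subtracting `Δ/(1+γ)` on undesired ones lies in the target Q-table set `𝒬†`. -/
theorem constructed_table_in_target_set
    {S A : Type*} [Fintype S] [Nonempty S] [Fintype A] [Nonempty A]
    (γ : ℝ) (hγ0 : 0 ≤ γ)
    (Qstar : S → A → ℝ)
    (πdag : S → Set A)
    (hSdag : {s | πdag s ≠ Set.univ}.Nonempty)
    (hne : ∀ s, πdag s ≠ Set.univ → (πdag s).Nonempty ∧ (πdag s)ᶜ.Nonempty)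
    (Δ : ℝ)
    (hΔ3 : (1 + γ) / 2 * sSup ((fun s =>
        max (sSup (Qstar s '' (πdag s)ᶜ) - sSup (Qstar s '' πdag s)) 0) ''
        {s | πdag s ≠ Set.univ}) < Δ)
    (Q' : S → A → ℝ)
    (hQ'in : ∀ s a, πdag s ≠ Set.univ → a ∈ πdag s →
      Q' s a = Qstar s a + Δ / (1 + γ))
    (hQ'out : ∀ s a, πdag s ≠ Set.univ → a ∉ πdag s →
      Q' s a = Qstar s a - Δ / (1 + γ))
    (hQ'id : ∀ s a, πdag s = Set.univ → Q' s a = Qstar s a) :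
    ∀ s, πdag s ≠ Set.univ →
      sSup (Q' s '' (πdag s)ᶜ) < sSup (Q' s '' πdag s) := by
  intro s hs
  obtain ⟨hin, hout⟩ := hne s hs
  have h1γ : (0:ℝ) < 1 + γ := by linarith
  set c := Δ / (1 + γ) with hc
  -- rewrite images
  have hIn : Q' s '' πdag s = (fun x => x + c) '' (Qstar s '' πdag s) := by
    rw [Set.image_image]
    exact Set.image_congr fun a ha => hQ'in s a hs ha
  have hOut : Q' s '' (πdag s)ᶜ = (fun x => x + (-c)) '' (Qstar s '' (πdag s)ᶜ) := by
    rw [Set.image_image]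
    refine Set.image_congr fun a ha => ?_
    rw [hQ'out s a hs ha]; ring
  have hfinIn : (Qstar s '' πdag s).Finite := (Set.toFinite _).image _
  have hfinOut : (Qstar s '' (πdag s)ᶜ).Finite := (Set.toFinite _).image _
  rw [hIn, hOut, sSup_image_add' _ hfinOut (hout.image _),
      sSup_image_add' _ hfinIn (hin.image _)]
  -- key inequality: gap < 2c
  set g := max (sSup (Qstar s '' (πdag s)ᶜ) - sSup (Qstar s '' πdag s)) 0 with hg
  have hmem : g ∈ ((fun s =>
      max (sSup (Qstar s '' (πdag s)ᶜ) - sSup (Qstar s '' πdag s)) 0) ''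
      {s | πdag s ≠ Set.univ}) := ⟨s, hs, rfl⟩
  have hfinS : ((fun s =>
      max (sSup (Qstar s '' (πdag s)ᶜ) - sSup (Qstar s '' πdag s)) 0) ''
      {s | πdag s ≠ Set.univ}).Finite := (Set.toFinite _).image _
  have hle : g ≤ sSup _ := le_csSup hfinS.bddAbove hmem
  have h2 : (1 + γ) / 2 * g < Δ := by
    calc (1 + γ) / 2 * g ≤ (1 + γ) / 2 * _ := by
          apply mul_le_mul_of_nonneg_left hle; positivity
      _ < Δ := hΔ3
  have hgap : sSup (Qstar s '' (πdag s)ᶜ) - sSup (Qstar s '' πdag s) ≤ g := le_max_left _ _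
  have hclt : g < 2 * c := by
    rw [hc, show (2:ℝ) * (Δ / (1 + γ)) = 2 * Δ / (1 + γ) by ring, lt_div_iff₀ h1γ]
    nlinarith
  linarith [hgap, hclt]
end

section
/- Let S and A be finite nonempty sets, P a transition kernel, R : S × A × S → ℝ, γ ∈ [0,1), and let Q* satisfy the Bellman optimality equation Q*(s,a) = ∑_{s'} P(s,a,s')(R(s,a,s') + γ max_{a'∈A} Q*(s',a')). Let Δ > 0 and let Q' : S × A → ℝ be any table with |Q'(s,a) - Q*(s,a)| ≤ Δ/(1+γ) for all (s,a) (in particular, the table of Algorithm 2 obtained from Q* by adding ±Δ/(1+γ) on target states). Define R'(s,a) = Q'(s,a) - γ ∑_{s'} P(s,a,s') max_{a'∈A} Q'(s',a') and the attack δ(s,a) = R'(s,a) - ∑_{s'} P(s,a,s') R(s,a,s'). Then |δ(s,a)| ≤ Δ for all (s,a); i.e., the non-adaptive attack policy φ^{sas}_{Δ₃} respects the magnitude constraint. -/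
lemma qmax_sub_le {A : Type*} [Fintype A] [Nonempty A] (f g : A → ℝ) (ε : ℝ)
    (h : ∀ a, |f a - g a| ≤ ε) : |qmax f - qmax g| ≤ ε := by
  have key : ∀ (u v : A → ℝ), (∀ a, |u a - v a| ≤ ε) → qmax u - qmax v ≤ ε := by
    intro u v h
    have h1 : qmax u ≤ qmax v + ε := by
      apply Finset.sup'_le
      intro a _
      have := abs_le.1 (h a)
      have hle : v a ≤ qmax v := Finset.le_sup' v (Finset.mem_univ a)
      linarith [this.2]
    linarith
  have h2 := key f g h
  have h3 := key g f (fun a => by rw [abs_sub_comm]; exact h a)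
  rw [abs_le]; constructor <;> linarith

/-- Validity of the non-adaptive attack `φ^{sas}_{Δ₃}`: if `Q'` is within
`Δ/(1+γ)` of `Q*` in every entry, then the induced attack
`δ(s,a) = R'(s,a) - E_{s'∼P(·|s,a)}[R(s,a,s')]` has magnitude at most `Δ`. -/
theorem nonadaptive_attack_magnitude
    {S A : Type*} [Fintype S] [Nonempty S] [Fintype A] [Nonempty A]
    (P : S → A → S → ℝ) (hP0 : ∀ s a s', 0 ≤ P s a s')
    (hP1 : ∀ s a, ∑ s', P s a s' = 1)
    (R : S → A → S → ℝ) (γ : ℝ) (hγ0 : 0 ≤ γ) (hγ1 : γ < 1)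
    (Qstar : S → A → ℝ)
    (hBellman : ∀ s a, Qstar s a =
      ∑ s', P s a s' * (R s a s' + γ * qmax (Qstar s')))
    (Δ : ℝ) (hΔ : 0 < Δ)
    (Q' : S → A → ℝ) (hQ' : ∀ s a, |Q' s a - Qstar s a| ≤ Δ / (1 + γ))
    (R' : S → A → ℝ)
    (hR' : ∀ s a, R' s a = Q' s a - γ * ∑ s', P s a s' * qmax (Q' s'))
    (δ : S → A → ℝ)
    (hδ : ∀ s a, δ s a = R' s a - ∑ s', P s a s' * R s a s') :
    ∀ s a, |δ s a| ≤ Δ := by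
  intro s a
  set ε := Δ / (1 + γ) with hε
  have hγpos : (0:ℝ) < 1 + γ := by linarith
  have hεpos : 0 ≤ ε := le_of_lt (div_pos hΔ hγpos)
  -- rewrite δ
  have hexp : δ s a = (Q' s a - Qstar s a)
      - γ * ∑ s', P s a s' * (qmax (Q' s') - qmax (Qstar s')) := by
    rw [hδ, hR', hBellman]
    simp only [Finset.mul_sum, mul_add, mul_sub, Finset.sum_add_distrib,
      Finset.sum_sub_distrib, mul_comm, mul_left_comm, mul_assoc]
    ring_nf
  have hsum : |∑ s', P s a s' * (qmax (Q' s') - qmax (Qstar s'))| ≤ ε := by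
    calc |∑ s', P s a s' * (qmax (Q' s') - qmax (Qstar s'))|
        ≤ ∑ s', |P s a s' * (qmax (Q' s') - qmax (Qstar s'))| :=
          Finset.abs_sum_le_sum_abs _ _
      _ ≤ ∑ s', P s a s' * ε := by
          apply Finset.sum_le_sum
          intro s' _
          rw [abs_mul, abs_of_nonneg (hP0 s a s')]
          exact mul_le_mul_of_nonneg_left
            (qmax_sub_le _ _ ε (fun a' => hQ' s' a')) (hP0 s a s')
      _ = ε := by rw [← Finset.sum_mul, hP1, one_mul]
  have h1 := hQ' s a
  have : |δ s a| ≤ ε + γ * ε := by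
    rw [hexp]
    calc |(Q' s a - Qstar s a) - γ * ∑ s', P s a s' * (qmax (Q' s') - qmax (Qstar s'))|
        ≤ |Q' s a - Qstar s a| + |γ * ∑ s', P s a s' * (qmax (Q' s') - qmax (Qstar s'))| :=
          abs_sub _ _
      _ ≤ ε + γ * ε := by
          rw [abs_mul, abs_of_nonneg hγ0]
          exact add_le_add h1 (mul_le_mul_of_nonneg_left hsum hγ0)
  have : |δ s a| ≤ (1 + γ) * ε := by linarith [this]
  rw [hε, mul_div_cancel₀ Δ (ne_of_gt hγpos)] at this
  exact this
end

section
/- Let m ≥ 2 be a natural number, ε ∈ [0,1), and let V : ℕ → ℝ satisfy V(1) = 0 and, for every t with 2 ≤ t ≤ m, V(t) = 1 + (1-ε)·V(t-1) + ε·[((t-1)/m)·V(t-1) + (1/m)·V(1) + ((m-t)/m)·V(t)]. Then for every t with 1 ≤ t ≤ m, 0 ≤ V(t) ≤ (t-1)/(1-ε); in particular V(t) ≤ m/(1-ε) for all 1 ≤ t ≤ m. -/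
/-- Lemma 2 of the paper: the expected number of visits needed by the greedy
attack to enforce a target action set is at most `(t-1)/(1-ε) ≤ m/(1-ε)`. -/
theorem faa_visit_count_bound
    (m : ℕ) (hm : 2 ≤ m) (ε : ℝ) (hε0 : 0 ≤ ε) (hε1 : ε < 1)
    (V : ℕ → ℝ) (hV1 : V 1 = 0)
    (hrec : ∀ t : ℕ, 2 ≤ t → t ≤ m →
      V t = 1 + (1 - ε) * V (t - 1) +
        ε * (((t : ℝ) - 1) / m * V (t - 1) + 1 / m * V 1 +
          ((m : ℝ) - t) / m * V t)) :
    ∀ t : ℕ, 1 ≤ t → t ≤ m →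
      0 ≤ V t ∧ V t ≤ ((t : ℝ) - 1) / (1 - ε) ∧ V t ≤ (m : ℝ) / (1 - ε) := by
  have hm' : (2:ℝ) ≤ (m:ℝ) := by exact_mod_cast hm
  have hmpos : (0:ℝ) < (m:ℝ) := by linarith
  have h1ε : (0:ℝ) < 1 - ε := by linarith
  have key : ∀ t : ℕ, 1 ≤ t → t ≤ m → 0 ≤ V t ∧ V t ≤ ((t:ℝ) - 1) / (1 - ε) := by
    intro t
    induction t with
    | zero => intro h; omega
    | succ n ih =>
      intro _ hle
      by_cases hn : n = 0
      · subst hn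
        simp [hV1]
      · have hn1 : 1 ≤ n := Nat.one_le_iff_ne_zero.mpr hn
        have hnm : n ≤ m := by omega
        obtain ⟨h0, h1⟩ := ih hn1 hnm
        have heq := hrec (n+1) (by omega) hle
        simp only [Nat.add_sub_cancel] at heq
        push_cast at heq
        have hc : (n:ℝ) + 1 ≤ (m:ℝ) := by exact_mod_cast hle
        have hn1' : (1:ℝ) ≤ (n:ℝ) := by exact_mod_cast hn1
        rw [hV1] at heq
        have heq' : ((m:ℝ) - ε * ((m:ℝ) - ((n:ℝ)+1))) * V (n+1)
            = (m:ℝ) + ((1 - ε) * (m:ℝ) + ε * (n:ℝ)) * V n := by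
          field_simp at heq
          nlinarith [heq]
        have hd : (0:ℝ) < (m:ℝ) - ε * ((m:ℝ) - ((n:ℝ)+1)) := by nlinarith
        have hcn : (0:ℝ) ≤ (1 - ε) * (m:ℝ) + ε * (n:ℝ) := by positivity
        constructor
        · nlinarith [mul_nonneg hcn h0]
        · rw [le_div_iff₀ h1ε] at h1 ⊢
          push_cast
          nlinarith [mul_le_mul_of_nonneg_left h1 hcn]
  intro t ht htm
  obtain ⟨h0, h1⟩ := key t ht htm
  refine ⟨h0, h1, h1.trans ?_⟩
  have : ((t:ℝ) - 1) ≤ (m:ℝ) := by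
    have : (t:ℝ) ≤ (m:ℝ) := by exact_mod_cast htm
    linarith
  gcongr
end
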